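/- Let V = {1,2,3,4} and let H consist of all subsets of V with at most 2 elements together with {1,2,3} and {1,2,4}. Then (V, H) is boolean representable, but its lattice of flats is not (upper) semimodular: the flats {2} and {3} each cover the bottom flat ∅, their join in Fl(V,H) is V, yet {2} is not covered by V (since {2} ⊂ {1,2} ⊂ V in Fl(V,H)). -/

import Mathlib

universe u v

/-- `F ⊆ V` is a flat of the simplicial complex `(V, H)`: for every `I ∈ H` with
`I ⊆ F` and every `p ∈ V \ F`, `I ∪ {p} ∈ H`. -/
def IsCFlat {α : Type u} (V : Set α) (H : Set (Set α)) (F : Set α) : Prop :=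
  F ⊆ V ∧ ∀ I ∈ H, I ⊆ F → ∀ p ∈ V \ F, insert p I ∈ H

/-- `(V, H)` is a finite simplicial complex: `V` is finite and nonempty, and
`H ⊆ 2^V` is nonempty and closed under taking subsets. -/
def IsCpx {α : Type u} (V : Set α) (H : Set (Set α)) : Prop :=
  V.Finite ∧ V.Nonempty ∧ H.Nonempty ∧ (∀ X ∈ H, X ⊆ V) ∧ ∀ X ∈ H, ∀ Y ⊆ X, Y ∈ H

/-- `X` is a transversal of the successive differences for some chain
`F 0 ⊂ F 1 ⊂ … ⊂ F k` of flats of `(V, H)`: `X` admits an enumeration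
`x 0, …, x (k-1)` with `x i ∈ F (i+1) \ F i`. -/
def TransvSD {α : Type u} (V : Set α) (H : Set (Set α)) (X : Set α) : Prop :=
  ∃ (k : ℕ) (F : Fin (k + 1) → Set α) (x : Fin k → α),
    (∀ i, IsCFlat V H (F i)) ∧ StrictMono F ∧
    Function.Injective x ∧ X = Set.range x ∧
    ∀ i : Fin k, x i ∈ F i.succ \ F i.castSucc

/-- `(V, H)` is boolean representable: every `X ∈ H` is a transversal of the
successive differences for some chain of flats of `(V, H)`. -/
def BoolRep {α : Type u} (V : Set α) (H : Set (Set α)) : Prop :=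
  ∀ X ∈ H, TransvSD V H X

namespace Stmt8Aux

def H0 : Set (Set (Fin 4)) := {X : Set (Fin 4) | X.ncard ≤ 2} ∪ {{0, 1, 2}, {0, 1, 3}}

lemma mem_H0 {X : Set (Fin 4)} : X ∈ H0 ↔ X.ncard ≤ 2 ∨ X = {0,1,2} ∨ X = {0,1,3} := by
  simp only [H0, Set.mem_union, Set.mem_setOf_eq, Set.mem_insert_iff, Set.mem_singleton_iff]

lemma ncard2 (a b : Fin 4) (hab : a ≠ b) : ({a,b} : Set (Fin 4)).ncard = 2 := by
  rw [Set.ncard_insert_of_notMem (by simp [hab]), Set.ncard_singleton]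

lemma ncard3 (a b c : Fin 4) (hab : a ≠ b) (hac : a ≠ c) (hbc : b ≠ c) :
    ({a,b,c} : Set (Fin 4)).ncard = 3 := by
  rw [Set.ncard_insert_of_notMem (by simp [hab, hac]), ncard2 b c hbc]

lemma flat_small {F : Set (Fin 4)} (h : F.ncard ≤ 1) : IsCFlat Set.univ H0 F := by
  refine ⟨Set.subset_univ _, fun I hI hIF p _ => ?_⟩
  rw [mem_H0]; left
  have h1 : (insert p I).ncard ≤ (insert p F).ncard :=
    Set.ncard_le_ncard (Set.insert_subset_insert hIF) (Set.toFinite _)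
  have h2 := Set.ncard_insert_le p F
  omega

lemma flat_empty : IsCFlat Set.univ H0 ∅ := flat_small (by simp)

lemma flat_singleton (a : Fin 4) : IsCFlat Set.univ H0 {a} := flat_small (by simp)

lemma flat_univ : IsCFlat Set.univ H0 Set.univ :=
  ⟨Set.subset_univ _, fun I _ _ p hp => by simp at hp⟩

lemma flat_01 : IsCFlat Set.univ H0 {0, 1} := by
  refine ⟨Set.subset_univ _, fun I hI hIF p hp => ?_⟩
  by_cases hI2 : I = {0, 1}
  · subst hI2
    have hp2 : p = 2 ∨ p = 3 := by
      simp only [Set.mem_diff, Set.mem_univ, true_and, Set.mem_insert_iff,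
        Set.mem_singleton_iff] at hp
      fin_cases p <;> simp_all
    rw [mem_H0]
    rcases hp2 with rfl | rfl
    · right; left; ext x; simp; tauto
    · right; right; ext x; simp; tauto
  · have hss : I ⊂ {0, 1} := hIF.ssubset_of_ne hI2
    have h1 := Set.ncard_lt_ncard hss (Set.toFinite _)
    rw [ncard2 0 1 (by decide)] at h1
    have h2 := Set.ncard_insert_le p I
    rw [mem_H0]; left; omega

lemma flat_12_univ {F : Set (Fin 4)} (hF : IsCFlat Set.univ H0 F)
    (h1 : (1 : Fin 4) ∈ F) (h2 : (2 : Fin 4) ∈ F) : F = Set.univ := by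
  obtain ⟨-, hflat⟩ := hF
  have h3 : (3 : Fin 4) ∈ F := by
    by_contra h3
    have hm := hflat {1, 2} (by rw [mem_H0]; left; rw [ncard2 1 2 (by decide)])
      (by intro x hx; rcases hx with rfl | hx; exact h1; rw [Set.mem_singleton_iff] at hx; subst hx; exact h2)
      3 ⟨Set.mem_univ _, h3⟩
    rw [mem_H0] at hm
    rcases hm with hm | hm | hm
    · rw [ncard3 3 1 2 (by decide) (by decide) (by decide)] at hm; omega
    · have := hm ▸ (show (3 : Fin 4) ∈ ({3,1,2} : Set (Fin 4)) by simp)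
      simp at this
    · have := hm ▸ (show (2 : Fin 4) ∈ ({3,1,2} : Set (Fin 4)) by simp)
      simp at this
  have h0 : (0 : Fin 4) ∈ F := by
    by_contra h0
    have hm := hflat {2, 3} (by rw [mem_H0]; left; rw [ncard2 2 3 (by decide)])
      (by intro x hx; rcases hx with rfl | hx; exact h2; rw [Set.mem_singleton_iff] at hx; subst hx; exact h3)
      0 ⟨Set.mem_univ _, h0⟩
    rw [mem_H0] at hm
    rcases hm with hm | hm | hm
    · rw [ncard3 0 2 3 (by decide) (by decide) (by decide)] at hm; omega
    · have := hm ▸ (show (3 : Fin 4) ∈ ({0,2,3} : Set (Fin 4)) by simp)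
      simp at this
    · have := hm ▸ (show (2 : Fin 4) ∈ ({0,2,3} : Set (Fin 4)) by simp)
      simp at this
  ext x
  simp only [Set.mem_univ, iff_true]
  fin_cases x <;> assumption

lemma ssub_univ {s : Set (Fin 4)} (a : Fin 4) (ha : a ∉ s) : s ⊂ Set.univ := by
  rw [Set.ssubset_univ_iff]
  intro h; exact ha (h ▸ Set.mem_univ a)

lemma transv0 : TransvSD Set.univ H0 (∅ : Set (Fin 4)) := by
  refine ⟨0, fun _ => ∅, Fin.elim0, fun _ => flat_empty, ?_, fun i => i.elim0,
    by rw [Set.range_eq_empty], fun i => i.elim0⟩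
  intro i j h
  have hi := i.isLt
  have hj := j.isLt
  exact absurd (Fin.lt_def.mp h) (by omega)

lemma transv1 (a : Fin 4) : TransvSD Set.univ H0 ({a} : Set (Fin 4)) := by
  refine ⟨1, ![∅, Set.univ], ![a], ?_, ?_, ?_, ?_, ?_⟩
  · intro i; fin_cases i
    · exact flat_empty
    · exact flat_univ
  · rw [Fin.strictMono_iff_lt_succ]
    intro i; fin_cases i
    simp only [Matrix.cons_val_zero, Matrix.cons_val_one, Matrix.head_cons]
    exact Set.empty_ssubset.mpr ⟨a, Set.mem_univ a⟩
  · intro i j hij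
    have hi := i.isLt
    have hj := j.isLt
    exact Fin.ext (by omega)
  · simp
  · intro i; fin_cases i; simp

lemma transv2 (a b : Fin 4) (hab : a ≠ b) : TransvSD Set.univ H0 ({a, b} : Set (Fin 4)) := by
  refine ⟨2, ![∅, {a}, Set.univ], ![a, b], ?_, ?_, ?_, ?_, ?_⟩
  · intro i; fin_cases i
    · exact flat_empty
    · exact flat_singleton a
    · exact flat_univ
  · rw [Fin.strictMono_iff_lt_succ]
    intro i; fin_cases i
    · simpa using Set.empty_ssubset.mpr (Set.singleton_nonempty a)
    · simpa using ssub_univ b (by simp [Ne.symm hab])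
  · intro i j h
    fin_cases i <;> fin_cases j <;> simp_all <;> exact hab (by simp_all)
  · ext y; simp [Matrix.range_cons]; tauto
  · intro i; fin_cases i <;> simp [Ne.symm hab]

lemma transv3 (c : Fin 4) (hc0 : c ≠ 0) (hc1 : c ≠ 1) :
    TransvSD Set.univ H0 ({0, 1, c} : Set (Fin 4)) := by
  refine ⟨3, ![∅, {0}, {0, 1}, Set.univ], ![0, 1, c], ?_, ?_, ?_, ?_, ?_⟩
  · intro i; fin_cases i
    · exact flat_empty
    · exact flat_singleton 0
    · exact flat_01
    · exact flat_univ
  · rw [Fin.strictMono_iff_lt_succ]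
    intro i; fin_cases i
    · simpa using Set.empty_ssubset.mpr (Set.singleton_nonempty 0)
    · have key : ({0} : Set (Fin 4)) ⊂ {0, 1} := by
        refine Set.ssubset_iff_subset_ne.mpr ⟨by simp, fun h => ?_⟩
        have h1 : (1 : Fin 4) ∈ ({0,1} : Set (Fin 4)) := by simp
        rw [← h] at h1
        simp at h1
      simpa using key
    · have key : ({0, 1} : Set (Fin 4)) ⊂ Set.univ := by
        refine ssub_univ 2 ?_
        simp only [Set.mem_insert_iff, Set.mem_singleton_iff]
        decide
      simpa using key
  · intro i j h
    fin_cases i <;> fin_cases j <;> simp_all [Ne.symm hc0, Ne.symm hc1]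
  · ext y; simp [Matrix.range_cons]; tauto
  · intro i
    fin_cases i <;> simp_all [Ne.symm hc0, Ne.symm hc1]

end Stmt8Aux

open Stmt8Aux in
/-- For `V = {1,2,3,4}` (modeled as `Fin 4`, with `i : Fin 4` standing for `i+1`)
and `H = P_{≤2}(V) ∪ {{1,2,3}, {1,2,4}}`: `(V, H)` is boolean representable, but
its lattice of flats is not upper semimodular: the flats `{2}` and `{3}` both
cover the bottom flat `∅`, their join in `Fl(V,H)` is `V`, yet `{2}` is not
covered by `V` since `{2} ⊂ {1,2} ⊂ V` with `{1,2}` a flat. -/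
theorem stmt8 (V : Set (Fin 4)) (hV : V = Set.univ)
    (H : Set (Set (Fin 4)))
    (hH : H = {X : Set (Fin 4) | X.ncard ≤ 2} ∪ {{0, 1, 2}, {0, 1, 3}}) :
    BoolRep V H ∧
    -- `∅` is the bottom flat
    (IsCFlat V H ∅) ∧
    -- `{2}` and `{3}` are flats covering `∅`
    (IsCFlat V H {1} ∧ ∀ G, IsCFlat V H G → ∅ ⊂ G → G ⊂ {1} → False) ∧
    (IsCFlat V H {2} ∧ ∀ G, IsCFlat V H G → ∅ ⊂ G → G ⊂ {2} → False) ∧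
    -- the join of `{2}` and `{3}` in the lattice of flats is `V`
    (⋂₀ {F | IsCFlat V H F ∧ ({1} : Set (Fin 4)) ∪ {2} ⊆ F} = V) ∧
    -- but `{2}` is not covered by `V`: the flat `{1,2}` lies strictly between
    (IsCFlat V H {0, 1} ∧ ({1} : Set (Fin 4)) ⊂ {0, 1} ∧ ({0, 1} : Set (Fin 4)) ⊂ V) := by
  subst hV
  have hH' : H = H0 := hH
  subst hH'
  refine ⟨?_, flat_empty, ⟨flat_singleton 1, ?_⟩, ⟨flat_singleton 2, ?_⟩, ?_, flat_01, ?_, ?_⟩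
  · -- BoolRep
    intro X hX
    rw [mem_H0] at hX
    rcases hX with hX | hX | hX
    · have h012 : X.ncard = 0 ∨ X.ncard = 1 ∨ X.ncard = 2 := by omega
      rcases h012 with h | h | h
      · rw [Set.ncard_eq_zero (Set.toFinite _)] at h; subst h; exact transv0
      · rw [Set.ncard_eq_one] at h; obtain ⟨a, rfl⟩ := h; exact transv1 a
      · rw [Set.ncard_eq_two] at h; obtain ⟨a, b, hab, rfl⟩ := h; exact transv2 a b hab
    · subst hX; exact transv3 2 (by decide) (by decide)
    · subst hX; exact transv3 3 (by decide) (by decide)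
  · intro G _ hG1 hG2
    rw [Set.ssubset_singleton_iff] at hG2
    exact hG1.ne' hG2
  · intro G _ hG1 hG2
    rw [Set.ssubset_singleton_iff] at hG2
    exact hG1.ne' hG2
  · apply subset_antisymm
    · exact Set.sInter_subset_of_mem ⟨flat_univ, Set.subset_univ _⟩
    · intro x _ F hF
      obtain ⟨hFflat, hFsub⟩ := hF
      have h1 : (1 : Fin 4) ∈ F := hFsub (by simp)
      have h2 : (2 : Fin 4) ∈ F := hFsub (by simp)
      rw [flat_12_univ hFflat h1 h2]
      trivial
  · refine Set.ssubset_iff_subset_ne.mpr ⟨by simp, fun h => ?_⟩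
    have h0 : (0 : Fin 4) ∈ ({0,1} : Set (Fin 4)) := by simp
    rw [← h] at h0
    simp at h0
  · refine ssub_univ 2 ?_
    simp only [Set.mem_insert_iff, Set.mem_singleton_iff]
    decide
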